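/- Let q_{ji} ∈ ℝ for j,i ∈ {0,1}, let r_0, r_1 ∈ ℝ be strictly positive, and let c_{jk} ∈ ℝ for j,k ∈ {0,1} satisfy c_{0k} ≠ c_{1k} for each k ∈ {0,1}. Then there exists Λ ∈ ℝ such that for every λ ≥ Λ and every b > 0 there exist strictly positive reals α_{jik} (j,i,k ∈ {0,1}) satisfying: (i) r_0·α_{0ik} + r_1·α_{1ik} = r_k·b·(λ + q_{ki}) for all i,k ∈ {0,1}; and (ii) r_0·c_{0k}·(α_{01k} − α_{00k}) = r_1·c_{1k}·(α_{10k} − α_{11k}) for each k ∈ {0,1}. -/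

import Mathlib

/-- Lemma 5.6 (lem:alphabeta): a linear-algebraic existence statement over ℝ. -/
theorem stmt_0 (q : Fin 2 → Fin 2 → ℝ) (r : Fin 2 → ℝ) (hr : ∀ j, 0 < r j)
    (c : Fin 2 → Fin 2 → ℝ) (hc : ∀ k : Fin 2, c 0 k ≠ c 1 k) :
    ∃ Λ : ℝ, ∀ lam : ℝ, Λ ≤ lam → ∀ b : ℝ, 0 < b →
      ∃ α : Fin 2 → Fin 2 → Fin 2 → ℝ,
        (∀ j i k, 0 < α j i k) ∧
        (∀ i k : Fin 2, r 0 * α 0 i k + r 1 * α 1 i k = r k * b * (lam + q k i)) ∧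
        (∀ k : Fin 2, r 0 * c 0 k * (α 0 1 k - α 0 0 k)
          = r 1 * c 1 k * (α 1 0 k - α 1 1 k)) := by
  have hr0 : (0:ℝ) < r 0 := hr 0
  have hr1 : (0:ℝ) < r 1 := hr 1
  set D : Fin 2 → ℝ := fun k => c 1 k * r k * (q k 0 - q k 1) / (r 0 * (c 0 k - c 1 k)) with hDdef
  set t : ℝ := 1 + |D 0| + |D 1| with htdef
  have habs : ∀ k : Fin 2, |D k| + 1 ≤ t := by
    rw [Fin.forall_fin_two]
    constructor
    · have := abs_nonneg (D 1); linarith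
    · have := abs_nonneg (D 0); linarith
  have htpos : 0 < t := by
    have h0 := abs_nonneg (D 0); have h1 := abs_nonneg (D 1); linarith
  have htD : ∀ k, 0 < t + D k := by
    intro k
    have h1 := habs k
    have h2 := neg_abs_le (D k)
    linarith
  refine ⟨max (max ((r 0 * (2*t) + 1)/r 0 - q 0 0) ((r 0 * (2*t) + 1)/r 0 - q 0 1))
           (max ((r 0 * (2*t) + 1)/r 1 - q 1 0) ((r 0 * (2*t) + 1)/r 1 - q 1 1)),
         fun lam hlam b hb => ?_⟩
  have hkey : ∀ k i : Fin 2, r 0 * (2*t) + 1 ≤ r k * (lam + q k i) := by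
    rw [Fin.forall_fin_two]
    constructor <;> rw [Fin.forall_fin_two] <;> constructor
    · exact (div_le_iff₀' hr0).mp (by
        have := le_trans (le_max_left _ _) (le_trans (le_max_left _ _) hlam); linarith)
    · exact (div_le_iff₀' hr0).mp (by
        have := le_trans (le_max_right _ _) (le_trans (le_max_left _ _) hlam); linarith)
    · exact (div_le_iff₀' hr1).mp (by
        have := le_trans (le_max_left _ _) (le_trans (le_max_right _ _) hlam); linarith)
    · exact (div_le_iff₀' hr1).mp (by
        have := le_trans (le_max_right _ _) (le_trans (le_max_right _ _) hlam); linarith)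
  have hpos0 : ∀ i k : Fin 2, 0 < b * (t + if i = 0 then 0 else D k) := by
    intro i k
    have := htD k
    by_cases hi : i = 0 <;> simp [hi] <;> nlinarith
  have hpos1 : ∀ i k : Fin 2,
      0 < (r k * b * (lam + q k i) - r 0 * (b * (t + if i = 0 then 0 else D k))) / r 1 := by
    intro i k
    apply div_pos _ hr1
    have hk := hkey k i
    have hm := mul_le_mul_of_nonneg_right hk hb.le
    have h1 := habs k
    have h3 := le_abs_self (D k)
    have hrb : 0 < r 0 * b := mul_pos hr0 hb
    have h4 : t + D k ≤ 2 * t := by linarith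
    have h5 : r 0 * b * (t + D k) ≤ r 0 * b * (2 * t) :=
      mul_le_mul_of_nonneg_left h4 hrb.le
    by_cases hi : i = 0
    · subst hi
      simp only [reduceIte, add_zero]
      nlinarith [mul_pos hrb htpos]
    · simp only [if_neg hi]
      nlinarith [mul_pos hrb htpos]
  refine ⟨fun j i k => if j = 0 then b * (t + if i = 0 then 0 else D k)
      else (r k * b * (lam + q k i) - r 0 * (b * (t + if i = 0 then 0 else D k))) / r 1,
      ?_, ?_, ?_⟩
  · intro j i k
    by_cases hj : j = 0
    · simpa [hj] using hpos0 i k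
    · simpa [hj] using hpos1 i k
  · intro i k
    simp only [↓reduceIte, if_neg (show (1 : Fin 2) ≠ 0 by decide)]
    field_simp
    ring
  · intro k
    have hck : c 0 k - c 1 k ≠ 0 := sub_ne_zero.mpr (hc k)
    simp only [↓reduceIte, if_neg (show (1 : Fin 2) ≠ 0 by decide),
      if_neg (show (1 : Fin 2) ≠ 0 by decide), hDdef]
    field_simp
    ring
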